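/- arXiv:2201.04362 — 4 statements merged into one kernel-verified Lean document; each statement's English description precedes it below -/
import Mathlib

section
/- Let H and A be closed operators on a Hilbert space with H self-adjoint, H ≥ 0, and D(A) ⊇ D(H). If H ≥ λ A*A for some λ > 0 (i.e. ‖(H+μ)^{1/2}ψ‖² ≥ λ‖Aψ‖² for ψ ∈ D(H)), then D(A) ⊇ D(H^{1/2}) and for every μ > 0 the bounded operator A(H+μ)^{-1}A* satisfies A(H+μ)^{-1}A* ≤ 1/λ. -/
open scoped InnerProductSpace

/-- Lemma 2.2.  Let `H, A` be closed operators on a Hilbert space with `H` self-adjoint,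
`H ≥ 0` and `D(A) ⊇ D(H)`.  If `H ≥ λ A*A` in the quadratic form sense
(`⟪ψ, Hψ⟫ ≥ λ‖Aψ‖²` for `ψ ∈ D(H)`), then `D(A) ⊇ D(H^{1/2})` — here expressed as:
any `ψ` that is a limit of a sequence in `D(H)` which is Cauchy for the form norm of `H`
belongs to `D(A)` — and for every `μ > 0` the operator `A(H+μ)⁻¹A*` is bounded by `1/λ`:
whenever `(H+μ)ψ = A*φ` one has `Re ⟪Aψ, φ⟫ ≤ (1/λ)‖φ‖²`. -/
theorem lemma_basic_form_bound
    {E : Type*} [NormedAddCommGroup E] [InnerProductSpace ℂ E] [CompleteSpace E]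
    (H A : E →ₗ.[ℂ] E)
    (hHsa : IsSelfAdjoint H) (hHclosed : H.IsClosed) (hAclosed : A.IsClosed)
    (hAdense : Dense (A.domain : Set E))
    (hdom : H.domain ≤ A.domain)
    (hHpos : ∀ ψ : H.domain, 0 ≤ (⟪(ψ : E), H ψ⟫_ℂ).re)
    (lam : ℝ) (hlam : 0 < lam)
    (hform : ∀ ψ : H.domain, lam * ‖A ⟨(ψ : E), hdom ψ.2⟩‖ ^ 2 ≤ (⟪(ψ : E), H ψ⟫_ℂ).re) :
    (∀ ψ : E, ∀ f : ℕ → H.domain,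
        Filter.Tendsto (fun n => ((f n : E))) Filter.atTop (nhds ψ) →
        (∀ ε > (0:ℝ), ∃ N, ∀ m ≥ N, ∀ n ≥ N,
          (⟪((f m - f n : H.domain) : E), H (f m - f n)⟫_ℂ).re < ε) →
        ψ ∈ A.domain) ∧
    (∀ μ : ℝ, 0 < μ → ∀ φ : A.adjoint.domain, ∀ ψ : H.domain,
        H ψ + μ • (ψ : E) = A.adjoint φ →
        (⟪A ⟨(ψ : E), hdom ψ.2⟩, (φ : E)⟫_ℂ).re ≤ (1 / lam) * ‖(φ : E)‖ ^ 2) := by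
  constructor
  · -- Part 1
    intro ψ f hconv hCauchy
    -- the sequence `A (f n)` is Cauchy
    set g : ℕ → E := fun n => A ⟨(f n : E), hdom (f n).2⟩ with hg
    have hkey : ∀ m n : ℕ, g m - g n = A ⟨((f m - f n : H.domain) : E), hdom (f m - f n).2⟩ := by
      intro m n
      have : (⟨((f m - f n : H.domain) : E), hdom (f m - f n).2⟩ : A.domain)
          = ⟨(f m : E), hdom (f m).2⟩ - ⟨(f n : E), hdom (f n).2⟩ := by
        ext; simp
      rw [this, A.map_sub]
    have hgC : CauchySeq g := by
      rw [Metric.cauchySeq_iff]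
      intro ε hε
      obtain ⟨N, hN⟩ := hCauchy (lam * ε ^ 2) (by positivity)
      refine ⟨N, fun m hm n hn => ?_⟩
      have h1 := hform (f m - f n)
      have h2 := hN m hm n hn
      have h3 : ‖A ⟨((f m - f n : H.domain) : E), hdom (f m - f n).2⟩‖ ^ 2 < ε ^ 2 := by
        nlinarith
      have h4 : ‖A ⟨((f m - f n : H.domain) : E), hdom (f m - f n).2⟩‖ < ε :=
        lt_of_pow_lt_pow_left₀ 2 hε.le h3
      rw [dist_eq_norm, hkey m n]
      exact h4
    obtain ⟨η, hη⟩ := cauchySeq_tendsto_of_complete hgC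
    -- use closedness of A
    have hmem : (ψ, η) ∈ A.graph := by
      have hcl : IsClosed (A.graph : Set (E × E)) := hAclosed
      have : Filter.Tendsto (fun n => ((f n : E), g n)) Filter.atTop (nhds (ψ, η)) :=
        hconv.prodMk_nhds hη
      have hmemg : ∀ n, ((f n : E), g n) ∈ (A.graph : Set (E × E)) := by
        intro n
        exact A.mem_graph ⟨(f n : E), hdom (f n).2⟩
      exact hcl.mem_of_tendsto this (Filter.Eventually.of_forall hmemg)
    obtain ⟨y, hy1, hy2⟩ := (LinearPMap.mem_graph_iff A).mp hmem
    have : (y : E) = ψ := hy1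
    rw [← this]
    exact y.2
  · -- Part 2
    intro μ hμ φ ψ heq
    set a : A.domain := ⟨(ψ : E), hdom ψ.2⟩ with ha
    -- compute Re ⟪A ψ, φ⟫
    have hadj := LinearPMap.adjoint_isFormalAdjoint hAdense φ a
    have ht : (⟪A a, (φ : E)⟫_ℂ).re = (⟪(ψ : E), H ψ⟫_ℂ).re + μ * ‖(ψ : E)‖ ^ 2 := by
      have h1 : ⟪A a, (φ : E)⟫_ℂ = starRingEnd ℂ ⟪(φ : E), A a⟫_ℂ := (inner_conj_symm _ _).symm
      have h2 : ⟪(φ : E), A a⟫_ℂ = ⟪A.adjoint φ, (ψ : E)⟫_ℂ := hadj.symm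
      have h3 : ⟪A.adjoint φ, (ψ : E)⟫_ℂ = ⟪H ψ + μ • (ψ : E), (ψ : E)⟫_ℂ := by rw [heq]
      have h4 : ⟪H ψ + μ • (ψ : E), (ψ : E)⟫_ℂ
          = ⟪H ψ, (ψ : E)⟫_ℂ + (μ : ℂ) * ⟪(ψ : E), (ψ : E)⟫_ℂ := by
        have hsm : μ • (ψ : E) = (μ : ℂ) • (ψ : E) := (Complex.coe_smul μ _).symm
        rw [inner_add_left, hsm, inner_smul_left, Complex.conj_ofReal]
      have h5 : (⟪H ψ, (ψ : E)⟫_ℂ).re = (⟪(ψ : E), H ψ⟫_ℂ).re := by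
        rw [← inner_conj_symm ((ψ : E)) (H ψ), Complex.conj_re]
      have h6 : ⟪(ψ : E), (ψ : E)⟫_ℂ = ((‖(ψ : E)‖ : ℂ)) ^ 2 :=
        inner_self_eq_norm_sq_to_K ((ψ : E))
      rw [h1, Complex.conj_re, h2, h3, h4, h6]
      simp [Complex.add_re, Complex.mul_re, h5, ← Complex.ofReal_pow]
    set t : ℝ := (⟪A a, (φ : E)⟫_ℂ).re with htdef
    have hform' : lam * ‖A a‖ ^ 2 ≤ t := by
      rw [ht]
      have := hform ψ
      nlinarith [norm_nonneg ((ψ : E)), sq_nonneg ‖(ψ : E)‖]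
    have hCS : t ≤ ‖A a‖ * ‖(φ : E)‖ := by simpa using re_inner_le_norm (𝕜 := ℂ) (A a) ((φ : E))
    rcases le_or_gt t 0 with hto | hto
    · have : 0 ≤ (1 / lam) * ‖(φ : E)‖ ^ 2 := by positivity
      linarith
    · -- t > 0 : from lam * ‖Aψ‖² ≤ t ≤ ‖Aψ‖‖φ‖ deduce lam * t ≤ ‖φ‖²
      have hnn : 0 ≤ ‖A a‖ := norm_nonneg _
      have hφnn : 0 ≤ ‖(φ : E)‖ := norm_nonneg _
      have h8 : t * t ≤ (‖A a‖ * ‖(φ : E)‖) * (‖A a‖ * ‖(φ : E)‖) :=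
        mul_le_mul hCS hCS hto.le (by positivity)
      have key : lam * t ≤ ‖(φ : E)‖ ^ 2 := by
        have h9 : lam * t * t ≤ ‖(φ : E)‖ ^ 2 * t := by
          nlinarith [mul_le_mul_of_nonneg_left h8 hlam.le,
            mul_le_mul_of_nonneg_right hform' (sq_nonneg ‖(φ : E)‖)]
        exact le_of_mul_le_mul_right h9 hto
      rw [div_mul_eq_mul_div, one_mul, le_div_iff₀ hlam]
      linarith [key]
end

section
/- For any y ∈ ℝ² with y ≠ 0, the integral I(y) = ∫_{ℝ²} |e^{i p·y} − 1|² / (|y|² (|p|⁴ + |p|²)) dp satisfies I(y) ≤ π(|log|y|| + 2). -/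
open MeasureTheory Real Set
open scoped RealInnerProductSpace

private lemma norm_exp_I_sub_one_sq (t : ℝ) :
    ‖Complex.exp (Complex.I * t) - 1‖ ^ 2 = 2 - 2 * Real.cos t := by
  have h : Complex.exp (Complex.I * t) - 1
      = Complex.ofReal (Real.cos t - 1) + Complex.ofReal (Real.sin t) * Complex.I := by
    rw [mul_comm, Complex.exp_mul_I]; push_cast; ring
  rw [h, Complex.sq_norm, Complex.normSq_add_mul_I]
  nlinarith [Real.sin_sq_add_cos_sq t]

private lemma norm_exp_I_sub_one_sq_le_sq (t : ℝ) :
    ‖Complex.exp (Complex.I * t) - 1‖ ^ 2 ≤ t ^ 2 := by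
  rw [norm_exp_I_sub_one_sq]
  nlinarith [Real.one_sub_sq_div_two_le_cos (x := t)]

private lemma norm_exp_I_sub_one_sq_le_four (t : ℝ) :
    ‖Complex.exp (Complex.I * t) - 1‖ ^ 2 ≤ 4 := by
  rw [norm_exp_I_sub_one_sq]
  nlinarith [Real.neg_one_le_cos t]

private lemma log_one_add_le (t : ℝ) (ht : 0 < t) :
    Real.log (1 + t) ≤ |Real.log t| + Real.log 2 := by
  rcases le_or_gt 1 t with h | h
  · have h1 : Real.log (1 + t) ≤ Real.log (2 * t) := by
      apply Real.log_le_log (by linarith); linarith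
    rw [Real.log_mul (by norm_num) (by linarith)] at h1
    have := Real.log_nonneg h
    rw [abs_of_nonneg this]; linarith
  · have h1 : Real.log (1 + t) ≤ Real.log 2 := by
      apply Real.log_le_log (by linarith); linarith
    have := abs_nonneg (Real.log t)
    linarith

private lemma radial_log_integral {R : ℝ} (hR : 0 < R) :
    ∫ r in Set.Ioc (0:ℝ) R, r / (r ^ 2 + 1) = Real.log (1 + R ^ 2) / 2 := by
  rw [← intervalIntegral.integral_of_le hR.le]
  have hderiv : ∀ x ∈ Set.uIcc (0:ℝ) R,
      HasDerivAt (fun r : ℝ => Real.log (1 + r ^ 2) / 2) (x / (x ^ 2 + 1)) x := by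
    intro x _
    have h1 : HasDerivAt (fun r : ℝ => 1 + r ^ 2) (2 * x) x := by
      simpa using (hasDerivAt_pow 2 x).const_add 1
    have h2 := (h1.log (by positivity)).div_const 2
    refine h2.congr_deriv ?_
    field_simp; ring
  rw [intervalIntegral.integral_eq_sub_of_hasDerivAt hderiv ?_]
  · norm_num
  · apply Continuous.intervalIntegrable
    exact continuous_id'.div (by fun_prop) (fun x => by positivity)

private lemma radial_cube_integral {R A : ℝ} (hR : 0 < R) (hA : 0 < A) :
    ∫ r in Set.Ioi R, 4 / (A * r ^ 3) = 2 / (A * R ^ 2) := by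
  rw [setIntegral_congr_fun measurableSet_Ioi
    (g := fun r : ℝ => (4 / A) * r ^ (-(3:ℝ)))]
  · rw [integral_const_mul, integral_Ioi_rpow_of_lt (by norm_num) hR]
    rw [show (-(3:ℝ) + 1) = -2 by norm_num, show ((-2:ℝ)) = -(2:ℝ) by norm_num,
      Real.rpow_neg hR.le, Real.rpow_two]
    field_simp
    ring
  · intro r hr
    have hr0 : 0 < r := lt_trans hR hr
    show 4 / (A * r ^ 3) = (4 / A) * r ^ (-(3:ℝ))
    rw [Real.rpow_neg hr0.le, show ((3:ℝ)) = ((3:ℕ):ℝ) by norm_num, Real.rpow_natCast]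
    field_simp

private lemma angular_integral (y0 y1 a : ℝ) (ha : 0 < a) (hay : y0 ^ 2 + y1 ^ 2 = a ^ 2) :
    ∫ θ in Set.Ioo (-π) π, (y0 * Real.cos θ + y1 * Real.sin θ) ^ 2 / a ^ 2 = π := by
  rw [← integral_Ioc_eq_integral_Ioo,
    ← intervalIntegral.integral_of_le (by linarith [Real.pi_pos])]
  have hrw : ∀ x : ℝ, (y0 * Real.cos x + y1 * Real.sin x) ^ 2 / a ^ 2
      = (y0 ^ 2 / a ^ 2) * Real.cos x ^ 2 + ((2 * y0 * y1 / a ^ 2) * (Real.sin x * Real.cos x)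
          + (y1 ^ 2 / a ^ 2) * Real.sin x ^ 2) := by
    intro x; field_simp; ring
  simp_rw [hrw]
  have hc1 : Continuous fun x : ℝ => (y0 ^ 2 / a ^ 2) * Real.cos x ^ 2 := by fun_prop
  have hc2 : Continuous fun x : ℝ => (2 * y0 * y1 / a ^ 2) * (Real.sin x * Real.cos x) := by
    fun_prop
  have hc3 : Continuous fun x : ℝ => (y1 ^ 2 / a ^ 2) * Real.sin x ^ 2 := by fun_prop
  rw [intervalIntegral.integral_add (hc1.intervalIntegrable _ _)
      ((hc2.intervalIntegrable _ _).add (hc3.intervalIntegrable _ _)),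
    intervalIntegral.integral_add (hc2.intervalIntegrable _ _) (hc3.intervalIntegrable _ _),
    intervalIntegral.integral_const_mul, intervalIntegral.integral_const_mul,
    intervalIntegral.integral_const_mul, integral_cos_sq, integral_sin_sq,
    integral_sin_mul_cos₁]
  simp only [Real.sin_pi, Real.cos_pi, Real.sin_neg, Real.cos_neg]
  field_simp
  nlinarith [Real.pi_pos]

/-- pointwise bound -/
private lemma pointwise_bound (a R y0 y1 : ℝ) (ha : 0 < a) (hR : 0 < R)
    (hay : y0 ^ 2 + y1 ^ 2 = a ^ 2) (v : ℝ × ℝ) :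
    ‖Complex.exp (Complex.I * ((v.1 * y0 + v.2 * y1 : ℝ) : ℂ)) - 1‖ ^ 2 /
        (a ^ 2 * ((v.1 ^ 2 + v.2 ^ 2) ^ 2 + (v.1 ^ 2 + v.2 ^ 2)))
      ≤ Set.indicator {w : ℝ × ℝ | w.1 ^ 2 + w.2 ^ 2 ≤ R ^ 2}
          (fun w => (w.1 * y0 + w.2 * y1) ^ 2
            / (a ^ 2 * ((w.1 ^ 2 + w.2 ^ 2) ^ 2 + (w.1 ^ 2 + w.2 ^ 2)))) v
        + Set.indicator {w : ℝ × ℝ | R ^ 2 < w.1 ^ 2 + w.2 ^ 2}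
          (fun w => 4 / (a ^ 2 * (w.1 ^ 2 + w.2 ^ 2) ^ 2)) v := by
  set t : ℝ := v.1 ^ 2 + v.2 ^ 2 with ht_def
  have htnn : (0:ℝ) ≤ t := by positivity
  rcases le_or_gt t (R ^ 2) with hc | hc
  · rw [Set.indicator_of_mem (show v ∈ {w : ℝ × ℝ | w.1 ^ 2 + w.2 ^ 2 ≤ R ^ 2} from hc),
      Set.indicator_of_notMem
        (show v ∉ {w : ℝ × ℝ | R ^ 2 < w.1 ^ 2 + w.2 ^ 2} from not_lt.mpr hc), add_zero]
    rcases eq_or_lt_of_le htnn with h0 | h0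
    · have hd : a ^ 2 * (t ^ 2 + t) = 0 := by rw [← h0]; ring
      simp only [← ht_def, hd, div_zero, le_refl]
    · have hdpos : (0:ℝ) < a ^ 2 * (t ^ 2 + t) := by positivity
      exact div_le_div_of_nonneg_right (norm_exp_I_sub_one_sq_le_sq _) hdpos.le
  · rw [Set.indicator_of_notMem
        (show v ∉ {w : ℝ × ℝ | w.1 ^ 2 + w.2 ^ 2 ≤ R ^ 2} from not_le.mpr hc),
      Set.indicator_of_mem
        (show v ∈ {w : ℝ × ℝ | R ^ 2 < w.1 ^ 2 + w.2 ^ 2} from hc), zero_add]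
    have htpos : (0:ℝ) < t := lt_trans (by positivity) hc
    apply div_le_div₀ (by norm_num) (norm_exp_I_sub_one_sq_le_four _) (by positivity)
    show a ^ 2 * t ^ 2 ≤ a ^ 2 * (t ^ 2 + t)
    nlinarith [mul_nonneg (sq_nonneg a) htnn]

private lemma integrable_g1 (a R y0 y1 : ℝ) (ha : 0 < a) (hR : 0 < R)
    (hay : y0 ^ 2 + y1 ^ 2 = a ^ 2) :
    Integrable (Set.indicator {w : ℝ × ℝ | w.1 ^ 2 + w.2 ^ 2 ≤ R ^ 2}
      (fun w => (w.1 * y0 + w.2 * y1) ^ 2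
        / (a ^ 2 * ((w.1 ^ 2 + w.2 ^ 2) ^ 2 + (w.1 ^ 2 + w.2 ^ 2))))) := by
  have hmeas1 : MeasurableSet {w : ℝ × ℝ | w.1 ^ 2 + w.2 ^ 2 ≤ R ^ 2} := by
    apply measurableSet_le <;> fun_prop
  apply IntegrableOn.integrable_indicator _ hmeas1
  apply Measure.integrableOn_of_bounded (M := 1)
  · apply ne_of_lt
    refine lt_of_le_of_lt (measure_mono (fun v hv => ?_))
      (measure_closedBall_lt_top (x := (0:ℝ×ℝ)) (r := R))
    simp only [mem_setOf_eq] at hv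
    rw [Metric.mem_closedBall, dist_zero_right, Prod.norm_def]
    have h1 : |v.1| ≤ R := by
      rw [← Real.sqrt_sq_eq_abs, ← Real.sqrt_sq hR.le]
      apply Real.sqrt_le_sqrt; nlinarith [sq_nonneg v.2]
    have h2 : |v.2| ≤ R := by
      rw [← Real.sqrt_sq_eq_abs, ← Real.sqrt_sq hR.le]
      apply Real.sqrt_le_sqrt; nlinarith [sq_nonneg v.1]
    simp only [Real.norm_eq_abs]
    exact max_le h1 h2
  · apply Measurable.aestronglyMeasurable; fun_prop
  · filter_upwards with v
    rw [Real.norm_eq_abs, abs_of_nonneg (by positivity)]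
    rcases eq_or_lt_of_le (show (0:ℝ) ≤ v.1 ^ 2 + v.2 ^ 2 by positivity) with h0 | h0
    · have hd : a ^ 2 * ((v.1 ^ 2 + v.2 ^ 2) ^ 2 + (v.1 ^ 2 + v.2 ^ 2)) = 0 := by
        rw [← h0]; ring
      simp [hd]
    · apply div_le_one_of_le₀
      · nlinarith [sq_nonneg (v.1 * y1 - v.2 * y0), sq_nonneg a,
          mul_nonneg (sq_nonneg a) (sq_nonneg (v.1 ^ 2 + v.2 ^ 2))]
      · positivity

private lemma integrable_g2 (a R : ℝ) (ha : 0 < a) (hR : 0 < R) :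
    Integrable (Set.indicator {w : ℝ × ℝ | R ^ 2 < w.1 ^ 2 + w.2 ^ 2}
      (fun w => 4 / (a ^ 2 * (w.1 ^ 2 + w.2 ^ 2) ^ 2))) := by
  have hmeas2 : MeasurableSet {w : ℝ × ℝ | R ^ 2 < w.1 ^ 2 + w.2 ^ 2} := by
    apply measurableSet_lt <;> fun_prop
  set K : ℝ := 1 / R ^ 2 + 1 with hK_def
  have hK : 0 < K := by positivity
  have h4 : ((Module.finrank ℝ (ℝ × ℝ) : ℝ)) < 4 := by
    simp [Module.finrank_prod]; norm_num
  refine ((integrable_rpow_neg_one_add_norm_sq h4).const_mul (4 * K ^ 2 / a ^ 2)).mono'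
    ((Measurable.indicator (by fun_prop) hmeas2).aestronglyMeasurable) ?_
  filter_upwards with v
  have hnn : 0 ≤ Set.indicator {w : ℝ × ℝ | R ^ 2 < w.1 ^ 2 + w.2 ^ 2}
      (fun w => 4 / (a ^ 2 * (w.1 ^ 2 + w.2 ^ 2) ^ 2)) v := by
    apply Set.indicator_nonneg
    intro w _; positivity
  rw [Real.norm_eq_abs, abs_of_nonneg hnn]
  have hrw : ((1:ℝ) + ‖v‖ ^ 2) ^ (-(4:ℝ) / 2) = ((1 + ‖v‖ ^ 2) ^ 2)⁻¹ := by
    rw [show (-(4:ℝ) / 2) = -((2:ℕ):ℝ) by norm_num, Real.rpow_neg (by positivity),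
      Real.rpow_natCast]
  rw [hrw]
  rcases le_or_gt (v.1 ^ 2 + v.2 ^ 2) (R ^ 2) with hc | hc
  · rw [Set.indicator_of_notMem
      (show v ∉ {w : ℝ × ℝ | R ^ 2 < w.1 ^ 2 + w.2 ^ 2} from not_lt.mpr hc)]
    positivity
  · rw [Set.indicator_of_mem (show v ∈ {w : ℝ × ℝ | R ^ 2 < w.1 ^ 2 + w.2 ^ 2} from hc)]
    set t : ℝ := v.1 ^ 2 + v.2 ^ 2 with ht_def
    have htpos : 0 < t := lt_trans (by positivity) hc
    have hv1 : ‖v.1‖ ^ 2 ≤ t := by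
      simp only [Real.norm_eq_abs, sq_abs, ht_def]; nlinarith [sq_nonneg v.2]
    have hv2 : ‖v.2‖ ^ 2 ≤ t := by
      simp only [Real.norm_eq_abs, sq_abs, ht_def]; nlinarith [sq_nonneg v.1]
    have hn2 : ‖v‖ ^ 2 ≤ t := by
      rw [Prod.norm_def]
      rcases max_cases ‖v.1‖ ‖v.2‖ with ⟨h, _⟩ | ⟨h, _⟩ <;> rw [h]
      · exact hv1
      · exact hv2
    have h1 : (1:ℝ) + ‖v‖ ^ 2 ≤ K * t := by
      have e : K * t * R ^ 2 = t + t * R ^ 2 := by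
        rw [hK_def]; field_simp
      nlinarith [hc, hn2, sq_nonneg R, pow_pos hR 2, e,
        mul_le_mul_of_nonneg_right hn2 (sq_nonneg R)]
    have h2 : ((1:ℝ) + ‖v‖ ^ 2) ^ 2 ≤ (K * t) ^ 2 := pow_le_pow_left₀ (by positivity) h1 2
    rw [div_le_iff₀ (by positivity)]
    have hC : 4 * K ^ 2 / a ^ 2 * ((1 + ‖v‖ ^ 2) ^ 2)⁻¹ * (a ^ 2 * t ^ 2)
        = (4 * (K * t) ^ 2) * ((1 + ‖v‖ ^ 2) ^ 2)⁻¹ := by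
      field_simp
    rw [hC]
    calc (4:ℝ) = (4 * (1 + ‖v‖ ^ 2) ^ 2) * ((1 + ‖v‖ ^ 2) ^ 2)⁻¹ := by field_simp
      _ ≤ (4 * (K * t) ^ 2) * ((1 + ‖v‖ ^ 2) ^ 2)⁻¹ := by
          apply mul_le_mul_of_nonneg_right (by linarith) (by positivity)

private lemma integral_g1 (a R y0 y1 : ℝ) (ha : 0 < a) (hR : 0 < R)
    (hay : y0 ^ 2 + y1 ^ 2 = a ^ 2) :
    (∫ v : ℝ × ℝ, Set.indicator {w : ℝ × ℝ | w.1 ^ 2 + w.2 ^ 2 ≤ R ^ 2}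
      (fun w => (w.1 * y0 + w.2 * y1) ^ 2
        / (a ^ 2 * ((w.1 ^ 2 + w.2 ^ 2) ^ 2 + (w.1 ^ 2 + w.2 ^ 2)))) v)
      = Real.log (1 + R ^ 2) / 2 * π := by
  rw [← integral_comp_polarCoord_symm]
  have honset : ∀ p ∈ polarCoord.target,
      p.1 • Set.indicator {w : ℝ × ℝ | w.1 ^ 2 + w.2 ^ 2 ≤ R ^ 2}
        (fun w => (w.1 * y0 + w.2 * y1) ^ 2
          / (a ^ 2 * ((w.1 ^ 2 + w.2 ^ 2) ^ 2 + (w.1 ^ 2 + w.2 ^ 2)))) (polarCoord.symm p)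
        = (Set.indicator (Set.Ioc 0 R) (fun r => r / (r ^ 2 + 1)) p.1)
          * ((y0 * Real.cos p.2 + y1 * Real.sin p.2) ^ 2 / a ^ 2) := by
    rintro ⟨r, θ⟩ ⟨hr, hθ⟩
    simp only [mem_Ioi] at hr
    have hsymm : polarCoord.symm (r, θ) = (r * Real.cos θ, r * Real.sin θ) := rfl
    rw [hsymm]
    have hsv : (r * Real.cos θ) ^ 2 + (r * Real.sin θ) ^ 2 = r ^ 2 := by
      linear_combination (r ^ 2) * (Real.sin_sq_add_cos_sq θ)
    rcases le_or_gt r R with hcase | hcase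
    · rw [Set.indicator_of_mem (show ((r * Real.cos θ, r * Real.sin θ) : ℝ × ℝ)
            ∈ {w : ℝ × ℝ | w.1 ^ 2 + w.2 ^ 2 ≤ R ^ 2} by
          simp only [mem_setOf_eq]; rw [hsv]; nlinarith),
        Set.indicator_of_mem (show r ∈ Set.Ioc 0 R from ⟨hr, hcase⟩)]
      simp only [smul_eq_mul]
      rw [hsv]
      have hr0 : r ≠ 0 := ne_of_gt hr
      have ha0 : a ≠ 0 := ne_of_gt ha
      field_simp
    · rw [Set.indicator_of_notMem (show ((r * Real.cos θ, r * Real.sin θ) : ℝ × ℝ)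
            ∉ {w : ℝ × ℝ | w.1 ^ 2 + w.2 ^ 2 ≤ R ^ 2} by
          simp only [mem_setOf_eq, not_le]; rw [hsv]; nlinarith),
        Set.indicator_of_notMem
          (show r ∉ Set.Ioc 0 R from fun h => absurd h.2 (not_le.mpr hcase))]
      simp
  rw [setIntegral_congr_fun polarCoord.open_target.measurableSet honset]
  rw [show polarCoord.target = Set.Ioi (0:ℝ) ×ˢ Set.Ioo (-π) π from rfl]
  rw [Measure.volume_eq_prod, ← Measure.prod_restrict]
  rw [integral_prod_mul (f := fun r : ℝ => Set.indicator (Set.Ioc 0 R)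
      (fun r => r / (r ^ 2 + 1)) r)
    (g := fun θ : ℝ => (y0 * Real.cos θ + y1 * Real.sin θ) ^ 2 / a ^ 2)]
  rw [integral_indicator measurableSet_Ioc, Measure.restrict_restrict measurableSet_Ioc,
    Set.inter_eq_self_of_subset_left Set.Ioc_subset_Ioi_self]
  rw [radial_log_integral hR, angular_integral y0 y1 a ha hay]

private lemma integral_g2 (a R : ℝ) (ha : 0 < a) (hR : 0 < R) (haR : a ^ 2 * R ^ 2 = 8) :
    (∫ v : ℝ × ℝ, Set.indicator {w : ℝ × ℝ | R ^ 2 < w.1 ^ 2 + w.2 ^ 2}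
      (fun w => 4 / (a ^ 2 * (w.1 ^ 2 + w.2 ^ 2) ^ 2)) v) = π / 2 := by
  rw [← integral_comp_polarCoord_symm]
  have honset : ∀ p ∈ polarCoord.target,
      p.1 • Set.indicator {w : ℝ × ℝ | R ^ 2 < w.1 ^ 2 + w.2 ^ 2}
        (fun w => 4 / (a ^ 2 * (w.1 ^ 2 + w.2 ^ 2) ^ 2)) (polarCoord.symm p)
        = (Set.indicator (Set.Ioi R) (fun r => 4 / (a ^ 2 * r ^ 3)) p.1) * (1:ℝ) := by
    rintro ⟨r, θ⟩ ⟨hr, hθ⟩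
    simp only [mem_Ioi] at hr
    have hsymm : polarCoord.symm (r, θ) = (r * Real.cos θ, r * Real.sin θ) := rfl
    rw [hsymm]
    have hsv : (r * Real.cos θ) ^ 2 + (r * Real.sin θ) ^ 2 = r ^ 2 := by
      linear_combination (r ^ 2) * (Real.sin_sq_add_cos_sq θ)
    rcases le_or_gt r R with hcase | hcase
    · rw [Set.indicator_of_notMem (show ((r * Real.cos θ, r * Real.sin θ) : ℝ × ℝ)
            ∉ {w : ℝ × ℝ | R ^ 2 < w.1 ^ 2 + w.2 ^ 2} by
          simp only [mem_setOf_eq, not_lt]; rw [hsv]; nlinarith),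
        Set.indicator_of_notMem (show r ∉ Set.Ioi R from not_lt.mpr hcase)]
      simp
    · rw [Set.indicator_of_mem (show ((r * Real.cos θ, r * Real.sin θ) : ℝ × ℝ)
            ∈ {w : ℝ × ℝ | R ^ 2 < w.1 ^ 2 + w.2 ^ 2} by
          simp only [mem_setOf_eq]; rw [hsv]; nlinarith),
        Set.indicator_of_mem (show r ∈ Set.Ioi R from hcase)]
      simp only [smul_eq_mul, mul_one]
      rw [hsv]
      have hr0 : r ≠ 0 := ne_of_gt hr
      have ha0 : a ≠ 0 := ne_of_gt ha
      field_simp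
  rw [setIntegral_congr_fun polarCoord.open_target.measurableSet honset]
  rw [show polarCoord.target = Set.Ioi (0:ℝ) ×ˢ Set.Ioo (-π) π from rfl]
  rw [Measure.volume_eq_prod, ← Measure.prod_restrict]
  rw [integral_prod_mul (f := fun r : ℝ => Set.indicator (Set.Ioi R)
      (fun r => 4 / (a ^ 2 * r ^ 3)) r) (g := fun _ : ℝ => (1:ℝ))]
  rw [integral_indicator measurableSet_Ioi, Measure.restrict_restrict measurableSet_Ioi,
    Set.inter_eq_self_of_subset_left (Set.Ioi_subset_Ioi hR.le)]
  rw [radial_cube_integral hR (by positivity)]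
  rw [integral_const, smul_eq_mul, mul_one, measureReal_restrict_apply_univ,
    Real.volume_real_Ioo_of_le (by linarith [Real.pi_pos]), haR]
  ring

/-- the main bound over `ℝ × ℝ` -/
private lemma planar_bound (a R y0 y1 : ℝ) (ha : 0 < a) (hR : 0 < R)
    (hay : y0 ^ 2 + y1 ^ 2 = a ^ 2) (haR : a ^ 2 * R ^ 2 = 8) :
    (∫ v : ℝ × ℝ, ‖Complex.exp (Complex.I * ((v.1 * y0 + v.2 * y1 : ℝ) : ℂ)) - 1‖ ^ 2 /
      (a ^ 2 * ((v.1 ^ 2 + v.2 ^ 2) ^ 2 + (v.1 ^ 2 + v.2 ^ 2))))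
      ≤ Real.log (1 + R ^ 2) / 2 * π + π / 2 := by
  have hint1 := integrable_g1 a R y0 y1 ha hR hay
  have hint2 := integrable_g2 a R ha hR
  calc (∫ v : ℝ × ℝ, ‖Complex.exp (Complex.I * ((v.1 * y0 + v.2 * y1 : ℝ) : ℂ)) - 1‖ ^ 2 /
      (a ^ 2 * ((v.1 ^ 2 + v.2 ^ 2) ^ 2 + (v.1 ^ 2 + v.2 ^ 2))))
      ≤ ∫ v : ℝ × ℝ, (Set.indicator {w : ℝ × ℝ | w.1 ^ 2 + w.2 ^ 2 ≤ R ^ 2}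
          (fun w => (w.1 * y0 + w.2 * y1) ^ 2
            / (a ^ 2 * ((w.1 ^ 2 + w.2 ^ 2) ^ 2 + (w.1 ^ 2 + w.2 ^ 2)))) v
        + Set.indicator {w : ℝ × ℝ | R ^ 2 < w.1 ^ 2 + w.2 ^ 2}
          (fun w => 4 / (a ^ 2 * (w.1 ^ 2 + w.2 ^ 2) ^ 2)) v) := by
        apply integral_mono_of_nonneg
        · filter_upwards with v
          exact div_nonneg (by positivity) (by positivity)
        · exact hint1.add hint2
        · filter_upwards with v
          exact pointwise_bound a R y0 y1 ha hR hay v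
    _ = Real.log (1 + R ^ 2) / 2 * π + π / 2 := by
        rw [integral_add hint1 hint2, integral_g1 a R y0 y1 ha hR hay,
          integral_g2 a R ha hR haR]

/-- The integral `I(y) = ∫ |e^{ip·y} − 1|² / (|y|²(|p|⁴+|p|²)) dp` over `ℝ²`
satisfies `I(y) ≤ π(|log|y|| + 2)` for every `y ≠ 0`. -/
theorem integral_bound_I {y : EuclideanSpace ℝ (Fin 2)} (hy : y ≠ 0) :
    (∫ p : EuclideanSpace ℝ (Fin 2),
        ‖Complex.exp (Complex.I * (⟪p, y⟫ : ℝ)) - 1‖ ^ 2 /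
          (‖y‖ ^ 2 * (‖p‖ ^ 4 + ‖p‖ ^ 2))) ≤ π * (|log ‖y‖| + 2) := by
  have ha : (0:ℝ) < ‖y‖ := norm_pos_iff.mpr hy
  have hay : (y 0) ^ 2 + (y 1) ^ 2 = ‖y‖ ^ 2 := by
    rw [EuclideanSpace.norm_eq, Real.sq_sqrt (by positivity)]
    simp [Fin.sum_univ_two]
  set a : ℝ := ‖y‖ with ha_def
  set R : ℝ := Real.sqrt 8 / a with hR_def
  have hR : 0 < R := by positivity
  have hR2 : R ^ 2 = 8 / a ^ 2 := by
    rw [hR_def, div_pow, Real.sq_sqrt (by norm_num)]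
  have haR : a ^ 2 * R ^ 2 = 8 := by
    rw [hR2]; field_simp
  -- Step 1 : transfer to ℝ × ℝ
  have step1 : (∫ p : EuclideanSpace ℝ (Fin 2),
        ‖Complex.exp (Complex.I * (⟪p, y⟫ : ℝ)) - 1‖ ^ 2 /
          (‖y‖ ^ 2 * (‖p‖ ^ 4 + ‖p‖ ^ 2)))
      = ∫ v : ℝ × ℝ, ‖Complex.exp (Complex.I * ((v.1 * y 0 + v.2 * y 1 : ℝ) : ℂ)) - 1‖ ^ 2 /
          (a ^ 2 * ((v.1 ^ 2 + v.2 ^ 2) ^ 2 + (v.1 ^ 2 + v.2 ^ 2))) := by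
    rw [← ((EuclideanSpace.volume_preserving_symm_measurableEquiv_toLp (Fin 2)).symm).integral_comp
        (MeasurableEquiv.toLp 2 (Fin 2 → ℝ)).symm.symm.measurableEmbedding _,
      ← ((volume_preserving_finTwoArrow ℝ).symm).integral_comp
        MeasurableEquiv.finTwoArrow.symm.measurableEmbedding _]
    apply integral_congr_ae
    filter_upwards with v
    have hinner : (⟪((MeasurableEquiv.toLp 2 (Fin 2 → ℝ)).symm.symm
          (MeasurableEquiv.finTwoArrow.symm v)), y⟫ : ℝ) = v.1 * y 0 + v.2 * y 1 := by
      rw [MeasurableEquiv.symm_symm, MeasurableEquiv.toLp_apply]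
      simp [PiLp.inner_apply, Fin.sum_univ_two, MeasurableEquiv.finTwoArrow]; ring
    have hnorm : ‖((MeasurableEquiv.toLp 2 (Fin 2 → ℝ)).symm.symm
          (MeasurableEquiv.finTwoArrow.symm v))‖ ^ 2 = v.1 ^ 2 + v.2 ^ 2 := by
      rw [MeasurableEquiv.symm_symm, MeasurableEquiv.toLp_apply, EuclideanSpace.norm_eq,
        Real.sq_sqrt (by positivity)]
      simp [Fin.sum_univ_two, MeasurableEquiv.finTwoArrow]
    have hnorm4 : ‖((MeasurableEquiv.toLp 2 (Fin 2 → ℝ)).symm.symm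
          (MeasurableEquiv.finTwoArrow.symm v))‖ ^ 4 = (v.1 ^ 2 + v.2 ^ 2) ^ 2 := by
      rw [show (4:ℕ) = 2 * 2 by norm_num, pow_mul, hnorm]
    rw [hinner, hnorm, hnorm4, ← ha_def]
  rw [step1]
  refine (planar_bound a R (y 0) (y 1) ha hR hay haR).trans ?_
  -- final arithmetic
  have hlog : Real.log (1 + R ^ 2) ≤ 2 * |Real.log a| + 4 * Real.log 2 := by
    rw [hR2]
    refine (log_one_add_le _ (by positivity)).trans ?_
    have h8 : Real.log (8 / a ^ 2) = 3 * Real.log 2 - 2 * Real.log a := by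
      rw [Real.log_div (by norm_num) (by positivity), Real.log_pow]
      have h83 : (8:ℝ) = 2 ^ 3 := by norm_num
      rw [h83, Real.log_pow]; push_cast; ring
    rw [h8]
    have h1 : |3 * Real.log 2 - 2 * Real.log a| ≤ |3 * Real.log 2| + |2 * Real.log a| :=
      abs_sub _ _
    have h2 : |3 * Real.log 2| = 3 * Real.log 2 := by
      rw [abs_of_nonneg]; positivity
    have h3 : |2 * Real.log a| = 2 * |Real.log a| := by
      rw [abs_mul, abs_of_nonneg (by norm_num : (0:ℝ) ≤ 2)]
    rw [h2, h3] at h1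
    linarith
  have hl2 : Real.log 2 < 0.6931471808 := Real.log_two_lt_d9
  nlinarith [Real.pi_pos, abs_nonneg (Real.log a)]
end

section
/- Let N ≥ 2 and define ψ: ℝ^N → ℝ by ψ(x₁,…,x_N) = e^{−|x|²} ∏_{i<j}(x_j − x_i), where |x|² = Σᵢ xᵢ². Then ψ is antisymmetric under permutation of its arguments, ψ ∈ H²(ℝ^N), and the restriction of ∂ψ/∂x₁ to the hyperplane {x₁ = x₂} equals −e^{−|x|²} ∏_{j=3}^N (x_j − x₁) ∏_{2≤i<j}(x_j − x_i), which is not identically zero on that hyperplane. -/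
open MeasureTheory Finset

namespace VGW

variable {N : ℕ}

/-- Polynomial functions on `Fin N → ℝ`. -/
inductive Poly (N : ℕ) : ((Fin N → ℝ) → ℝ) → Prop
  | const (c : ℝ) : Poly N fun _ => c
  | coord (i : Fin N) : Poly N fun x => x i
  | add {f g} : Poly N f → Poly N g → Poly N fun x => f x + g x
  | mul {f g} : Poly N f → Poly N g → Poly N fun x => f x * g x

theorem Poly.contDiff {f} (hf : Poly N f) : ContDiff ℝ ⊤ f := by
  induction hf with
  | const c => exact contDiff_const
  | coord i => exact (ContinuousLinearMap.proj i : (Fin N → ℝ) →L[ℝ] ℝ).contDiff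
  | add hf hg ihf ihg => exact ihf.add ihg
  | mul hf hg ihf ihg => exact ihf.mul ihg

theorem Poly.sub {f g} (hf : Poly N f) (hg : Poly N g) :
    Poly N fun x => f x - g x := by
  have : (fun x => f x - g x) = fun x => f x + (-1 : ℝ) * g x := by
    funext x; ring
  rw [this]
  exact hf.add ((Poly.const (-1)).mul hg)

theorem Poly.sum {ι : Type*} {s : Finset ι} {f : ι → (Fin N → ℝ) → ℝ}
    (h : ∀ i ∈ s, Poly N (f i)) : Poly N fun x => ∑ i ∈ s, f i x := by
  classical
  induction s using Finset.cons_induction with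
  | empty => simpa using Poly.const 0
  | cons a s ha ih =>
      simp only [Finset.sum_cons]
      exact (h a (Finset.mem_cons_self a s)).add
        (ih fun i hi => h i (Finset.mem_cons_of_mem hi))

theorem Poly.prod {ι : Type*} {s : Finset ι} {f : ι → (Fin N → ℝ) → ℝ}
    (h : ∀ i ∈ s, Poly N (f i)) : Poly N fun x => ∏ i ∈ s, f i x := by
  classical
  induction s using Finset.cons_induction with
  | empty => simpa using Poly.const 1
  | cons a s ha ih =>
      simp only [Finset.prod_cons]
      exact (h a (Finset.mem_cons_self a s)).mul
        (ih fun i hi => h i (Finset.mem_cons_of_mem hi))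

theorem Poly.growth {f} (hf : Poly N f) :
    ∃ C d, 0 ≤ C ∧ ∀ x, |f x| ≤ C * (1 + ‖x‖) ^ (d : ℕ) := by
  induction hf with
  | const c => exact ⟨|c|, 0, abs_nonneg c, fun x => by simp⟩
  | coord i =>
      refine ⟨1, 1, zero_le_one, fun x => ?_⟩
      have h1 : |x i| ≤ ‖x‖ := by
        simpa using norm_le_pi_norm x i
      have : ‖x‖ ≤ 1 + ‖x‖ := by linarith [norm_nonneg x]
      simpa using h1.trans this
  | @add f g hf hg ihf ihg =>
      obtain ⟨C₁, d₁, hC₁, h₁⟩ := ihf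
      obtain ⟨C₂, d₂, hC₂, h₂⟩ := ihg
      refine ⟨C₁ + C₂, max d₁ d₂, by linarith, fun x => ?_⟩
      have hx : (1:ℝ) ≤ 1 + ‖x‖ := by linarith [norm_nonneg x]
      have e₁ : (1 + ‖x‖) ^ d₁ ≤ (1 + ‖x‖) ^ (max d₁ d₂) :=
        pow_le_pow_right₀ hx (le_max_left _ _)
      have e₂ : (1 + ‖x‖) ^ d₂ ≤ (1 + ‖x‖) ^ (max d₁ d₂) :=
        pow_le_pow_right₀ hx (le_max_right _ _)
      calc |f x + g x| ≤ |f x| + |g x| := abs_add_le _ _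
        _ ≤ C₁ * (1 + ‖x‖) ^ d₁ + C₂ * (1 + ‖x‖) ^ d₂ := add_le_add (h₁ x) (h₂ x)
        _ ≤ C₁ * (1 + ‖x‖) ^ (max d₁ d₂) + C₂ * (1 + ‖x‖) ^ (max d₁ d₂) := by
            gcongr
        _ = (C₁ + C₂) * (1 + ‖x‖) ^ (max d₁ d₂) := by ring
  | @mul f g hf hg ihf ihg =>
      obtain ⟨C₁, d₁, hC₁, h₁⟩ := ihf
      obtain ⟨C₂, d₂, hC₂, h₂⟩ := ihg
      refine ⟨C₁ * C₂, d₁ + d₂, mul_nonneg hC₁ hC₂, fun x => ?_⟩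
      rw [abs_mul, pow_add]
      calc |f x| * |g x| ≤ (C₁ * (1 + ‖x‖) ^ d₁) * (C₂ * (1 + ‖x‖) ^ d₂) := by
            apply mul_le_mul (h₁ x) (h₂ x) (abs_nonneg _)
            positivity
        _ = C₁ * C₂ * ((1 + ‖x‖) ^ d₁ * (1 + ‖x‖) ^ d₂) := by ring

theorem Poly.fderiv_apply {f} (hf : Poly N f) (v : Fin N → ℝ) :
    Poly N fun x => fderiv ℝ f x v := by
  induction hf with
  | const c =>
      have : (fun x : Fin N → ℝ => fderiv ℝ (fun _ => c) x v) = fun _ => (0:ℝ) := by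
        funext x; simp
      rw [this]; exact Poly.const 0
  | coord i =>
      have : (fun x : Fin N → ℝ => fderiv ℝ (fun y => y i) x v) = fun _ => v i := by
        funext x
        have : fderiv ℝ (fun y : Fin N → ℝ => y i) x
            = (ContinuousLinearMap.proj i : (Fin N → ℝ) →L[ℝ] ℝ) :=
          (ContinuousLinearMap.proj i : (Fin N → ℝ) →L[ℝ] ℝ).fderiv
        rw [this]; rfl
      rw [this]; exact Poly.const (v i)
  | @add f g hf hg ihf ihg =>
      have : (fun x => fderiv ℝ (fun y => f y + g y) x v)
          = fun x => fderiv ℝ f x v + fderiv ℝ g x v := by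
        funext x
        rw [fderiv_fun_add (hf.contDiff.differentiable (by simp) x)
          (hg.contDiff.differentiable (by simp) x)]
        rfl
      rw [this]; exact ihf.add ihg
  | @mul f g hf hg ihf ihg =>
      have : (fun x => fderiv ℝ (fun y => f y * g y) x v)
          = fun x => f x * fderiv ℝ g x v + g x * fderiv ℝ f x v := by
        funext x
        rw [fderiv_fun_mul (hf.contDiff.differentiable (by simp) x)
          (hg.contDiff.differentiable (by simp) x)]
        rfl
      rw [this]; exact (hf.mul ihg).add (hg.mul ihf)

/-- The squared-sum function. -/
def S (N : ℕ) (x : Fin N → ℝ) : ℝ := ∑ i, x i ^ 2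

/-- Gaussian. -/
noncomputable def G (N : ℕ) (x : Fin N → ℝ) : ℝ := Real.exp (-S N x)

/-- The derivative of `S`. -/
noncomputable def LS (N : ℕ) (x : Fin N → ℝ) : (Fin N → ℝ) →L[ℝ] ℝ :=
  ∑ i, ((2:ℝ) * x i) • (ContinuousLinearMap.proj i)

theorem LS_apply (x v : Fin N → ℝ) : LS N x v = ∑ i, 2 * x i * v i := by
  simp [LS, ContinuousLinearMap.sum_apply, ContinuousLinearMap.smul_apply,
    ContinuousLinearMap.proj_apply, smul_eq_mul]

theorem hasFDerivAt_S (x : Fin N → ℝ) : HasFDerivAt (S N) (LS N x) x := by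
  have h : ∀ i : Fin N, HasFDerivAt (fun y : Fin N → ℝ => y i ^ 2)
      (((2:ℝ) * x i) • (ContinuousLinearMap.proj i : (Fin N → ℝ) →L[ℝ] ℝ)) x := by
    intro i
    have hm := ((ContinuousLinearMap.proj i : (Fin N → ℝ) →L[ℝ] ℝ).hasFDerivAt
      (x := x)).mul ((ContinuousLinearMap.proj i : (Fin N → ℝ) →L[ℝ] ℝ).hasFDerivAt (x := x))
    have e1 : (fun y : Fin N → ℝ => y i ^ 2) = fun y => y i * y i := by
      funext y; ring
    have e2 : ((2:ℝ) * x i) • (ContinuousLinearMap.proj i : (Fin N → ℝ) →L[ℝ] ℝ)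
        = x i • (ContinuousLinearMap.proj i : (Fin N → ℝ) →L[ℝ] ℝ)
          + x i • (ContinuousLinearMap.proj i : (Fin N → ℝ) →L[ℝ] ℝ) := by
      rw [two_mul, add_smul]
    rw [e1, e2]
    exact hm
  have := HasFDerivAt.fun_sum (fun i (_ : i ∈ Finset.univ) => h i)
  exact this

theorem hasFDerivAt_G (x : Fin N → ℝ) :
    HasFDerivAt (G N) (G N x • (-(LS N x))) x :=
  ((hasFDerivAt_S x).neg).exp

theorem contDiff_S : ContDiff ℝ ⊤ (S N) := by
  apply ContDiff.sum
  intro i _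
  exact (ContinuousLinearMap.proj i : (Fin N → ℝ) →L[ℝ] ℝ).contDiff.pow 2

theorem contDiff_G : ContDiff ℝ ⊤ (G N) :=
  Real.contDiff_exp.comp contDiff_S.neg

/-- Gaussian-times-polynomial functions. -/
def Nice (N : ℕ) (f : (Fin N → ℝ) → ℝ) : Prop :=
  ∃ g, Poly N g ∧ f = fun x => g x * G N x

theorem Nice.contDiff {f} (hf : Nice N f) : ContDiff ℝ ⊤ f := by
  obtain ⟨g, hg, rfl⟩ := hf
  exact hg.contDiff.mul contDiff_G

theorem Nice.fderiv_apply {f} (hf : Nice N f) (v : Fin N → ℝ) :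
    Nice N fun x => fderiv ℝ f x v := by
  obtain ⟨g, hg, rfl⟩ := hf
  refine ⟨fun x => fderiv ℝ g x v + g x * (-∑ i, 2 * x i * v i),
    (hg.fderiv_apply v).add (hg.mul ?_), ?_⟩
  · have : (fun x : Fin N → ℝ => -∑ i, 2 * x i * v i)
        = fun x => ∑ i : Fin N, (-(2 * v i)) * x i := by
      funext x; rw [← Finset.sum_neg_distrib]; congr 1; funext i; ring
    rw [this]
    exact Poly.sum fun i _ => (Poly.const _).mul (Poly.coord i)
  · funext x
    have hgd : DifferentiableAt ℝ g x := hg.contDiff.differentiable (by simp) x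
    have hGd : DifferentiableAt ℝ (G N) x := (hasFDerivAt_G x).differentiableAt
    rw [fderiv_fun_mul hgd hGd, (hasFDerivAt_G x).fderiv]
    simp only [ContinuousLinearMap.add_apply, ContinuousLinearMap.smul_apply,
      ContinuousLinearMap.neg_apply, smul_eq_mul]
    rw [LS_apply]
    ring

theorem norm_le_sqrt_S (x : Fin N → ℝ) : ‖x‖ ^ 2 ≤ S N x := by
  have hS : 0 ≤ S N x := Finset.sum_nonneg fun i _ => sq_nonneg _
  have h : ‖x‖ ≤ Real.sqrt (S N x) := by
    rw [pi_norm_le_iff_of_nonneg (Real.sqrt_nonneg _)]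
    intro i
    rw [Real.norm_eq_abs, ← Real.sqrt_sq_eq_abs]
    apply Real.sqrt_le_sqrt
    exact Finset.single_le_sum (fun j _ => sq_nonneg (x j)) (Finset.mem_univ i)
  calc ‖x‖ ^ 2 ≤ Real.sqrt (S N x) ^ 2 := by
        apply pow_le_pow_left₀ (norm_nonneg x) h
    _ = S N x := Real.sq_sqrt hS

theorem integrable_G : Integrable (G N) volume := by
  have : (G N) = fun x : Fin N → ℝ => ∏ i, Real.exp (-(x i ^ 2)) := by
    funext x
    rw [G, S, ← Real.exp_sum]
    congr 1
    rw [← Finset.sum_neg_distrib]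
  rw [this]
  apply Integrable.fintype_prod (f := fun (_ : Fin N) (t : ℝ) => Real.exp (-(t ^ 2)))
  intro i
  simpa using integrable_exp_neg_mul_sq (b := (1:ℝ)) one_pos

theorem Nice.memℒp {f} (hf : Nice N f) : MemLp f 2 volume := by
  have hcont := hf.contDiff.continuous
  obtain ⟨g, hg, rfl⟩ := hf
  obtain ⟨C, d, hC, hbound⟩ := hg.growth
  rw [memLp_two_iff_integrable_sq_norm hcont.aestronglyMeasurable]
  have key : ∀ x, ‖g x * G N x‖ ^ 2 ≤ (C ^ 2 * Real.exp ((d:ℝ) ^ 2)) * G N x := by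
    intro x
    have hGpos : 0 < G N x := Real.exp_pos _
    have h1 : ‖g x * G N x‖ ^ 2 = |g x| ^ 2 * Real.exp (-S N x) ^ 2 := by
      rw [Real.norm_eq_abs, abs_mul, mul_pow, G]
      rw [abs_of_pos (Real.exp_pos _)]
    rw [h1]
    have h2 : |g x| ^ 2 ≤ C ^ 2 * (1 + ‖x‖) ^ (2 * d) := by
      have := hbound x
      calc |g x| ^ 2 ≤ (C * (1 + ‖x‖) ^ d) ^ 2 := by
            apply pow_le_pow_left₀ (abs_nonneg _) this
        _ = C ^ 2 * (1 + ‖x‖) ^ (2 * d) := by rw [mul_pow, ← pow_mul, mul_comm d 2]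
    have h3 : (1 + ‖x‖) ^ (2 * d) ≤ Real.exp ((2 * d : ℝ) * ‖x‖) := by
      have e1 : (1 : ℝ) + ‖x‖ ≤ Real.exp ‖x‖ := by
        have := Real.add_one_le_exp ‖x‖
        linarith
      calc (1 + ‖x‖) ^ (2 * d) ≤ Real.exp ‖x‖ ^ (2 * d) :=
            pow_le_pow_left₀ (by positivity) e1 _
        _ = Real.exp ((2 * d : ℝ) * ‖x‖) := by
            rw [← Real.exp_nat_mul]; norm_num
    have h4 : Real.exp (-S N x) ≤ Real.exp (-‖x‖ ^ 2) :=
      Real.exp_le_exp.2 (by linarith [norm_le_sqrt_S x])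
    have h5 : Real.exp ((2 * d : ℝ) * ‖x‖) * Real.exp (-‖x‖ ^ 2)
        ≤ Real.exp ((d : ℝ) ^ 2) := by
      rw [← Real.exp_add]
      apply Real.exp_le_exp.2
      nlinarith [sq_nonneg (‖x‖ - (d : ℝ))]
    have hexp0 : (0:ℝ) < Real.exp (-S N x) := Real.exp_pos _
    calc |g x| ^ 2 * Real.exp (-S N x) ^ 2
        ≤ (C ^ 2 * (1 + ‖x‖) ^ (2 * d)) * Real.exp (-S N x) ^ 2 := by
          apply mul_le_mul_of_nonneg_right h2 (by positivity)
      _ = (C ^ 2 * ((1 + ‖x‖) ^ (2 * d) * Real.exp (-S N x))) * Real.exp (-S N x) := by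
          ring
      _ ≤ (C ^ 2 * (Real.exp ((2 * d : ℝ) * ‖x‖) * Real.exp (-‖x‖ ^ 2))) *
            Real.exp (-S N x) := by
          apply mul_le_mul_of_nonneg_right _ hexp0.le
          apply mul_le_mul_of_nonneg_left _ (by positivity)
          exact mul_le_mul h3 h4 hexp0.le (Real.exp_pos _).le
      _ ≤ (C ^ 2 * Real.exp ((d : ℝ) ^ 2)) * Real.exp (-S N x) := by
          apply mul_le_mul_of_nonneg_right _ hexp0.le
          exact mul_le_mul_of_nonneg_left h5 (by positivity)
      _ = (C ^ 2 * Real.exp ((d:ℝ) ^ 2)) * G N x := rfl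
  have hint : Integrable (fun x : Fin N → ℝ => (C ^ 2 * Real.exp ((d:ℝ) ^ 2)) * G N x)
      volume := integrable_G.const_mul _
  apply hint.mono' ((hcont.norm.pow 2).aestronglyMeasurable)
  filter_upwards with x
  rw [Real.norm_eq_abs, abs_of_nonneg (sq_nonneg _)]
  exact key x

theorem opnorm_le_sum {F : Type*} [NormedAddCommGroup F] [NormedSpace ℝ F]
    (L : (Fin N → ℝ) →L[ℝ] F) : ‖L‖ ≤ ∑ i, ‖L (Pi.single i 1)‖ := by
  refine L.opNorm_le_bound (Finset.sum_nonneg fun i _ => norm_nonneg _) fun v => ?_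
  have hv : v = ∑ i, v i • (Pi.single i 1 : Fin N → ℝ) := by
    have : ∀ i : Fin N, v i • (Pi.single i 1 : Fin N → ℝ) = Pi.single i (v i) := by
      intro i
      rw [← Pi.single_smul]
      norm_num
    simp only [this]
    exact (Finset.univ_sum_single v).symm
  calc ‖L v‖ = ‖∑ i, v i • L (Pi.single i 1)‖ := by
        conv_lhs => rw [hv]
        rw [map_sum]
        simp only [L.map_smul]
    _ ≤ ∑ i, ‖v i • L (Pi.single i 1)‖ := norm_sum_le _ _
    _ = ∑ i, ‖v i‖ * ‖L (Pi.single i 1)‖ := by simp [norm_smul]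
    _ ≤ ∑ i, ‖L (Pi.single i 1)‖ * ‖v‖ := by
        apply Finset.sum_le_sum
        intro i _
        rw [mul_comm]
        exact mul_le_mul_of_nonneg_left (norm_le_pi_norm v i) (norm_nonneg _)
    _ = (∑ i, ‖L (Pi.single i 1)‖) * ‖v‖ := by rw [Finset.sum_mul]

theorem Nice.memℒp_iteratedFDeriv {f} (hf : Nice N f) (k : ℕ) (hk : k ≤ 2) :
    MemLp (fun x => ‖iteratedFDeriv ℝ k f x‖) 2 volume := by
  have hmeas : AEStronglyMeasurable (fun x => ‖iteratedFDeriv ℝ k f x‖) volume :=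
    ((hf.contDiff.continuous_iteratedFDeriv le_top).norm).aestronglyMeasurable
  interval_cases k
  · -- k = 0
    apply MemLp.of_le hf.memℒp hmeas
    filter_upwards with x
    rw [norm_norm, norm_iteratedFDeriv_zero]
  · -- k = 1
    have hg : MemLp (fun x => ∑ i, ‖fderiv ℝ f x (Pi.single i 1)‖) 2 volume :=
      memLp_finset_sum _ fun i _ => (hf.fderiv_apply (Pi.single i 1)).memℒp.norm
    apply MemLp.of_le hg hmeas
    filter_upwards with x
    rw [norm_norm]
    have h1 : ‖iteratedFDeriv ℝ 1 f x‖ = ‖fderiv ℝ f x‖ := by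
      rw [← norm_iteratedFDeriv_fderiv, norm_iteratedFDeriv_zero]
    rw [h1]
    rw [Real.norm_eq_abs]
    exact le_trans (opnorm_le_sum _) (le_abs_self _)
  · -- k = 2
    have hdf : ∀ i j : Fin N,
        Nice N fun x => fderiv ℝ (fun y => fderiv ℝ f y (Pi.single j 1)) x (Pi.single i 1) :=
      fun i j => (hf.fderiv_apply (Pi.single j 1)).fderiv_apply (Pi.single i 1)
    have hg : MemLp (fun x => ∑ i, ∑ j,
        ‖fderiv ℝ (fun y => fderiv ℝ f y (Pi.single j 1)) x (Pi.single i 1)‖) 2 volume :=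
      memLp_finset_sum _ fun i _ =>
        memLp_finset_sum _ fun j _ => (hdf i j).memℒp.norm
    apply MemLp.of_le hg hmeas
    filter_upwards with x
    rw [norm_norm]
    have h2 : ∀ i j : Fin N,
        fderiv ℝ (fun y => fderiv ℝ f y (Pi.single j 1)) x (Pi.single i 1)
          = fderiv ℝ (fderiv ℝ f) x (Pi.single i 1) (Pi.single j 1) := by
      intro i j
      have hdfd : DifferentiableAt ℝ (fderiv ℝ f) x :=
        ((hf.contDiff.fderiv_right (m := 1) le_top).differentiable (by simp)) x
      have hcomp : (fun y => fderiv ℝ f y (Pi.single j 1))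
          = (ContinuousLinearMap.apply ℝ ℝ ((Pi.single j 1 : Fin N → ℝ))) ∘ (fderiv ℝ f) := rfl
      rw [hcomp,
        ((ContinuousLinearMap.apply ℝ ℝ ((Pi.single j 1 : Fin N → ℝ))).hasFDerivAt.comp x
          hdfd.hasFDerivAt).fderiv]
      rfl
    have h1 : ‖iteratedFDeriv ℝ 2 f x‖ = ‖fderiv ℝ (fderiv ℝ f) x‖ := by
      rw [← norm_iteratedFDeriv_fderiv, ← norm_iteratedFDeriv_fderiv,
        norm_iteratedFDeriv_zero]
    rw [h1, Real.norm_eq_abs]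
    refine le_trans ?_ (le_abs_self _)
    calc ‖fderiv ℝ (fderiv ℝ f) x‖ ≤ ∑ i, ‖fderiv ℝ (fderiv ℝ f) x (Pi.single i 1)‖ :=
          opnorm_le_sum _
      _ ≤ ∑ i, ∑ j, ‖fderiv ℝ (fderiv ℝ f) x (Pi.single i 1) (Pi.single j 1)‖ :=
          Finset.sum_le_sum fun i _ => opnorm_le_sum _
      _ = ∑ i, ∑ j,
            ‖fderiv ℝ (fun y => fderiv ℝ f y (Pi.single j 1)) x (Pi.single i 1)‖ := by
          simp only [h2]

theorem prod_pairs {M : Type*} [CommMonoid M] {n : ℕ} (f : Fin n → Fin n → M) :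
    ∏ p ∈ Finset.univ.filter (fun p : Fin n × Fin n => p.1 < p.2), f p.1 p.2
      = ∏ i, ∏ j ∈ Finset.Ioi i, f i j := by
  rw [Finset.prod_filter, ← Finset.univ_product_univ, Finset.prod_product]
  refine Finset.prod_congr rfl fun i _ => ?_
  rw [← Finset.prod_filter]
  apply Finset.prod_congr _ fun j _ => rfl
  ext j
  simp [Finset.mem_Ioi]

theorem vdm_eq_det {n : ℕ} (v : Fin n → ℝ) :
    ∏ p ∈ Finset.univ.filter (fun p : Fin n × Fin n => p.1 < p.2), (v p.2 - v p.1)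
      = (Matrix.vandermonde v).det := by
  rw [Matrix.det_vandermonde, prod_pairs (fun i j => v j - v i)]

theorem vdm_perm {n : ℕ} (σ : Equiv.Perm (Fin n)) (v : Fin n → ℝ) :
    ∏ p ∈ Finset.univ.filter (fun p : Fin n × Fin n => p.1 < p.2),
        ((v ∘ σ) p.2 - (v ∘ σ) p.1)
      = ((Equiv.Perm.sign σ : ℤ) : ℝ) *
        ∏ p ∈ Finset.univ.filter (fun p : Fin n × Fin n => p.1 < p.2), (v p.2 - v p.1) := by
  rw [vdm_eq_det, vdm_eq_det]
  have h : Matrix.vandermonde (v ∘ σ) = (Matrix.vandermonde v).submatrix σ id := by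
    ext i j
    simp [Matrix.vandermonde_apply, Matrix.submatrix_apply]
  rw [h, Matrix.det_permute]

def pairs (N : ℕ) : Finset (Fin N × Fin N) := Finset.univ.filter fun p => p.1 < p.2

noncomputable def V (N : ℕ) (x : Fin N → ℝ) : ℝ := ∏ p ∈ pairs N, (x p.2 - x p.1)

theorem hasFDerivAt_V (x : Fin N → ℝ) :
    HasFDerivAt (V N) (∑ p ∈ pairs N, (∏ q ∈ (pairs N).erase p, (x q.2 - x q.1)) •
      ((ContinuousLinearMap.proj p.2 : (Fin N → ℝ) →L[ℝ] ℝ)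
        - ContinuousLinearMap.proj p.1)) x := by
  classical
  have h := HasFDerivAt.finset_prod (u := pairs N)
    (g := fun p (y : Fin N → ℝ) => y p.2 - y p.1)
    (g' := fun p => (ContinuousLinearMap.proj p.2 : (Fin N → ℝ) →L[ℝ] ℝ)
      - ContinuousLinearMap.proj p.1)
    (x := x)
    (fun p _ => ((ContinuousLinearMap.proj p.2 : (Fin N → ℝ) →L[ℝ] ℝ).hasFDerivAt).sub
      ((ContinuousLinearMap.proj p.1 : (Fin N → ℝ) →L[ℝ] ℝ).hasFDerivAt))
  exact h

theorem mem_pairs {i0 i1 : Fin N} (h0 : (i0 : ℕ) = 0) (h1 : (i1 : ℕ) = 1) :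
    (i0, i1) ∈ pairs N := by
  simp only [pairs, Finset.mem_filter, Finset.mem_univ, true_and]
  rw [Fin.lt_def, h0, h1]
  omega

theorem key {i0 i1 : Fin N} (h0 : (i0 : ℕ) = 0) (h1 : (i1 : ℕ) = 1)
    (x : Fin N → ℝ) (hx : x i0 = x i1) :
    fderiv ℝ (fun y => Real.exp (-∑ i, y i ^ 2) * V N y) x (Pi.single i0 1)
      = -Real.exp (-∑ i, x i ^ 2) * ∏ q ∈ (pairs N).erase (i0, i1), (x q.2 - x q.1) := by
  classical
  have hE : (fun y => Real.exp (-∑ i, y i ^ 2) * V N y) = fun y => G N y * V N y := rfl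
  rw [hE, ((hasFDerivAt_G x).fun_mul (hasFDerivAt_V x)).fderiv]
  have hmem : (i0, i1) ∈ pairs N := mem_pairs h0 h1
  have hV0 : V N x = 0 := Finset.prod_eq_zero hmem (by rw [hx]; ring)
  simp only [ContinuousLinearMap.add_apply, ContinuousLinearMap.smul_apply, smul_eq_mul]
  rw [hV0]
  have hsum : ((∑ p ∈ pairs N, (∏ q ∈ (pairs N).erase p, (x q.2 - x q.1)) •
      ((ContinuousLinearMap.proj p.2 : (Fin N → ℝ) →L[ℝ] ℝ) - ContinuousLinearMap.proj p.1) :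
        (Fin N → ℝ) →L[ℝ] ℝ))
        (Pi.single i0 1)
      = ∑ p ∈ pairs N, (∏ q ∈ (pairs N).erase p, (x q.2 - x q.1)) *
          ((Pi.single i0 1 : Fin N → ℝ) p.2 - (Pi.single i0 1 : Fin N → ℝ) p.1) := by
    rw [ContinuousLinearMap.sum_apply]
    refine Finset.sum_congr rfl fun p _ => ?_
    simp
  rw [hsum, Finset.sum_eq_single (i0, i1) ?_ (fun h => absurd hmem h)]
  · have hne10 : i1 ≠ i0 := by
      intro h; rw [h] at h1; omega
    rw [show ((i0, i1).2 : Fin N) = i1 from rfl, show ((i0, i1).1 : Fin N) = i0 from rfl,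
      Pi.single_eq_of_ne hne10, Pi.single_eq_same]
    show G N x * _ + 0 * _ = _
    simp only [G, S]
    ring
  · intro p hp hne
    have hplt : p.1 < p.2 := (Finset.mem_filter.mp hp).2
    have hp2 : p.2 ≠ i0 := by
      intro h
      rw [Fin.lt_def, h, h0] at hplt; omega
    rw [Pi.single_eq_of_ne hp2]
    by_cases hp1 : p.1 = i0
    · have hmem' : (i0, i1) ∈ (pairs N).erase p :=
        Finset.mem_erase.mpr ⟨fun h => hne h.symm, hmem⟩
      rw [Finset.prod_eq_zero hmem' (by rw [hx]; ring)]
      ring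
    · rw [Pi.single_eq_of_ne hp1]; ring

theorem erase_split {i0 i1 : Fin N} (h0 : (i0 : ℕ) = 0) (h1 : (i1 : ℕ) = 1)
    (x : Fin N → ℝ) :
    ∏ q ∈ (pairs N).erase (i0, i1), (x q.2 - x q.1)
      = (∏ j ∈ Finset.univ.filter (fun j : Fin N => i1 < j), (x j - x i0)) *
        ∏ p ∈ Finset.univ.filter (fun p : Fin N × Fin N => i1 ≤ p.1 ∧ p.1 < p.2),
          (x p.2 - x p.1) := by
  classical
  rw [← Finset.prod_filter_mul_prod_filter_not ((pairs N).erase (i0, i1))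
    (fun q => q.1 = i0)]
  congr 1
  · refine Finset.prod_bij' (fun q _ => q.2) (fun j _ => (i0, j)) ?_ ?_ ?_ ?_ ?_
    · intro q hq
      rw [Finset.mem_filter] at hq
      obtain ⟨hqe, hq1⟩ := hq
      rw [Finset.mem_erase] at hqe
      obtain ⟨hne, hqp⟩ := hqe
      have hlt : q.1 < q.2 := (Finset.mem_filter.mp hqp).2
      refine Finset.mem_filter.mpr ⟨Finset.mem_univ _, ?_⟩
      rw [Fin.lt_def, h1]
      rw [Fin.lt_def, hq1, h0] at hlt
      by_contra hle
      push_neg at hle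
      have h2 : q.2 = i1 := by rw [Fin.ext_iff, h1]; omega
      exact hne (Prod.ext hq1 h2)
    · intro j hj
      have hj' : 1 < (j : ℕ) := by
        have := (Finset.mem_filter.mp hj).2
        rw [Fin.lt_def, h1] at this
        exact this
      refine Finset.mem_filter.mpr ⟨Finset.mem_erase.mpr ⟨?_, ?_⟩, rfl⟩
      · intro h
        have hji : j = i1 := congrArg Prod.snd h
        rw [Fin.ext_iff, h1] at hji
        omega
      · refine Finset.mem_filter.mpr ⟨Finset.mem_univ _, ?_⟩
        show i0 < j
        rw [Fin.lt_def, h0]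
        omega
    · intro q hq
      rw [Finset.mem_filter] at hq
      exact Prod.ext hq.2.symm rfl
    · intro j _
      rfl
    · intro q hq
      rw [Finset.mem_filter] at hq
      rw [hq.2]
  · apply Finset.prod_congr _ fun q _ => rfl
    ext q
    simp only [Finset.mem_filter, Finset.mem_erase, Finset.mem_univ, true_and, pairs]
    constructor
    · rintro ⟨⟨hne, hlt⟩, hq1⟩
      have hv : (q.1 : ℕ) ≠ 0 := fun h => hq1 (by rw [Fin.ext_iff, h0]; exact h)
      rw [Fin.lt_def] at hlt
      refine ⟨?_, by rw [Fin.lt_def]; exact hlt⟩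
      rw [Fin.le_def, h1]
      omega
    · rintro ⟨hle, hlt⟩
      rw [Fin.le_def, h1] at hle
      have hq1 : ¬ q.1 = i0 := by
        intro h
        rw [Fin.ext_iff, h0] at h
        omega
      refine ⟨⟨?_, (by rw [Fin.lt_def] at hlt ⊢; exact hlt)⟩, hq1⟩
      intro h
      exact hq1 (congrArg Prod.fst h)

end VGW

open MeasureTheory

/-- The Gaussian–Vandermonde wave function `ψ(x) = e^{−|x|²} ∏_{i<j}(x_j − x_i)` is
antisymmetric, lies in `H²(ℝ^N)`, and `∂ψ/∂x₁` restricted to the hyperplane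
`{x₁ = x₂}` equals `−e^{−|x|²} ∏_{j≥3}(x_j−x_1) ∏_{2≤i<j}(x_j−x_i)`, which does not
vanish identically there. -/
theorem vandermonde_gaussian_witness (N : ℕ) (hN : 2 ≤ N)
    (ψ : (Fin N → ℝ) → ℝ)
    (hψ : ∀ x, ψ x = Real.exp (-∑ i, x i ^ 2) *
        ∏ p ∈ Finset.univ.filter (fun p : Fin N × Fin N => p.1 < p.2), (x p.2 - x p.1)) :
    -- antisymmetry
    (∀ σ : Equiv.Perm (Fin N), ∀ x, ψ (x ∘ σ) = (Equiv.Perm.sign σ : ℤ) * ψ x) ∧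
    -- ψ ∈ H²(ℝ^N): ψ and its derivatives up to order two are square integrable
    (∀ k : ℕ, k ≤ 2 → MemLp (fun x => ‖iteratedFDeriv ℝ k ψ x‖) 2 volume) ∧
    -- the restriction of ∂ψ/∂x₁ to {x₁ = x₂}
    (∀ x : Fin N → ℝ, x ⟨0, by omega⟩ = x ⟨1, by omega⟩ →
      fderiv ℝ ψ x (Pi.single ⟨0, by omega⟩ 1) =
        -Real.exp (-∑ i, x i ^ 2) *
          (∏ j ∈ Finset.univ.filter (fun j : Fin N => (⟨1, by omega⟩ : Fin N) < j),
            (x j - x ⟨0, by omega⟩)) *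
          ∏ p ∈ Finset.univ.filter
              (fun p : Fin N × Fin N => (⟨1, by omega⟩ : Fin N) ≤ p.1 ∧ p.1 < p.2),
            (x p.2 - x p.1)) ∧
    -- it is not identically zero on that hyperplane
    (∃ x : Fin N → ℝ, x ⟨0, by omega⟩ = x ⟨1, by omega⟩ ∧
      fderiv ℝ ψ x (Pi.single ⟨0, by omega⟩ 1) ≠ 0) := by
  classical
  set i0 : Fin N := ⟨0, by omega⟩ with hi0
  set i1 : Fin N := ⟨1, by omega⟩ with hi1
  have h0 : (i0 : ℕ) = 0 := rfl
  have h1 : (i1 : ℕ) = 1 := rfl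
  have hψfun : ψ = fun y => Real.exp (-∑ i, y i ^ 2) * VGW.V N y :=
    funext fun y => hψ y
  have hkey : ∀ x : Fin N → ℝ, x i0 = x i1 →
      fderiv ℝ ψ x (Pi.single i0 1) =
        -Real.exp (-∑ i, x i ^ 2) *
          (∏ j ∈ Finset.univ.filter (fun j : Fin N => i1 < j), (x j - x i0)) *
          ∏ p ∈ Finset.univ.filter
              (fun p : Fin N × Fin N => i1 ≤ p.1 ∧ p.1 < p.2), (x p.2 - x p.1) := by
    intro x hx
    rw [hψfun, VGW.key h0 h1 x hx, VGW.erase_split h0 h1 x]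
    ring
  refine ⟨?_, ?_, hkey, ?_⟩
  · -- antisymmetry
    intro σ x
    rw [hψ, hψ]
    have hsum : ∑ i, (x ∘ σ) i ^ 2 = ∑ i, x i ^ 2 :=
      Fintype.sum_equiv σ _ _ fun i => rfl
    rw [hsum, VGW.vdm_perm σ x]
    ring
  · -- H²
    intro k hk
    have hpoly : VGW.Poly N (VGW.V N) := by
      have : VGW.V N = fun x => ∏ p ∈ VGW.pairs N, (x p.2 - x p.1) := rfl
      rw [this]
      exact VGW.Poly.prod fun p _ => (VGW.Poly.coord p.2).sub (VGW.Poly.coord p.1)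
    have hnice : VGW.Nice N ψ := by
      refine ⟨VGW.V N, hpoly, ?_⟩
      funext x
      rw [hψfun]
      exact mul_comm _ _
    exact hnice.memℒp_iteratedFDeriv k hk
  · -- nonvanishing
    set x : Fin N → ℝ := fun j => if (j : ℕ) = 0 then 1 else (j : ℕ) with hxdef
    have hx01 : x i0 = x i1 := by
      simp [hxdef, h0, h1]
    refine ⟨x, hx01, ?_⟩
    rw [hkey x hx01]
    apply mul_ne_zero
    apply mul_ne_zero
    · exact neg_ne_zero.mpr (Real.exp_ne_zero _)
    · rw [Finset.prod_ne_zero_iff]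
      intro j hj
      have hjv : 1 < (j : ℕ) := by
        have := (Finset.mem_filter.mp hj).2
        rw [Fin.lt_def, h1] at this
        exact this
      have hxj : x j = (j : ℕ) := by
        simp [hxdef]
        omega
      have hxi0 : x i0 = 1 := by simp [hxdef, h0]
      rw [hxj, hxi0]
      have : (2 : ℝ) ≤ (j : ℕ) := by exact_mod_cast hjv
      intro h
      linarith [sub_eq_zero.mp h]
    · rw [Finset.prod_ne_zero_iff]
      intro q hq
      obtain ⟨-, hle, hlt⟩ := Finset.mem_filter.mp hq
      rw [Fin.le_def, h1] at hle
      rw [Fin.lt_def] at hlt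
      have hx1 : x q.1 = ((q.1 : ℕ) : ℝ) := by
        simp [hxdef]
        omega
      have hx2 : x q.2 = ((q.2 : ℕ) : ℝ) := by
        simp [hxdef]
        omega
      rw [hx1, hx2]
      intro h
      have := sub_eq_zero.mp h
      have : (q.2 : ℕ) = (q.1 : ℕ) := by exact_mod_cast this
      omega
end

section
/- Let H₀ ≥ 0 be self-adjoint and W = A*B with A, B closed, D(A) = D(B) ⊇ D(H₀), B = JA for a self-adjoint unitary J. Suppose H = H₀ − W is self-adjoint on D(H₀), H₀ − (1+δ)W ≥ 0 for some δ > 0, and C·H₀ ≥ A*A for some C > 0. Then H ≥ 0 and for all z > 0, ‖(H+z)^{-1} − (H₀+z)^{-1}‖ ≤ (1 + C(1+δ)/δ) · ‖A R₀(z)‖², where R₀(z) = (H₀+z)^{-1}. -/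
open scoped InnerProductSpace

/-- Proposition 2.1 (abstract form).  Let `H₀ ≥ 0` be self-adjoint with domain `D`,
`W = A*B` with `B = JA` for a self-adjoint unitary `J`, and `H = H₀ − W`.  If
`H₀ − (1+δ)W ≥ 0` and `C·H₀ ≥ A*A` in the quadratic-form sense on `D`, then `H ≥ 0`
and `‖(H+z)⁻¹ − (H₀+z)⁻¹‖ ≤ (1 + C(1+δ)/δ)‖A R₀(z)‖²` for every `z > 0`; the
resolvents are encoded as two-sided inverses `R₀, R`. -/
theorem resolvent_difference_bound
    {E F : Type*} [NormedAddCommGroup E] [InnerProductSpace ℂ E] [CompleteSpace E]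
    [NormedAddCommGroup F] [InnerProductSpace ℂ F] [CompleteSpace F]
    (D : Submodule ℂ E) (H₀ W : E →ₗ[ℂ] E) (A : E →ₗ[ℂ] F)
    (J : F →L[ℂ] F) (hJsa : IsSelfAdjoint J) (hJunit : ∀ y, J (J y) = y)
    (hH₀sym : ∀ x ∈ D, ∀ y ∈ D, ⟪H₀ x, y⟫_ℂ = ⟪x, H₀ y⟫_ℂ)
    -- W = A*B with B = JA
    (hWdef : ∀ x ∈ D, ∀ y ∈ D, ⟪y, W x⟫_ℂ = ⟪A y, J (A x)⟫_ℂ)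
    -- H₀ ≥ 0
    (hH₀pos : ∀ x ∈ D, 0 ≤ (⟪x, H₀ x⟫_ℂ).re)
    -- H₀ − (1+δ)W ≥ 0
    (δ : ℝ) (hδ : 0 < δ)
    (hform : ∀ x ∈ D, (1 + δ) * (⟪x, W x⟫_ℂ).re ≤ (⟪x, H₀ x⟫_ℂ).re)
    -- C·H₀ ≥ A*A
    (C : ℝ) (hC : 0 < C)
    (hCform : ∀ x ∈ D, ‖A x‖ ^ 2 ≤ C * (⟪x, H₀ x⟫_ℂ).re)
    -- the resolvents R₀ = (H₀+z)⁻¹ and R = (H+z)⁻¹, z > 0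
    (z : ℝ) (hz : 0 < z) (R₀ R : E →L[ℂ] E)
    (hR₀mem : ∀ x, R₀ x ∈ D) (hRmem : ∀ x, R x ∈ D)
    (hR₀left : ∀ x, H₀ (R₀ x) + (z : ℂ) • R₀ x = x)
    (hR₀right : ∀ x ∈ D, R₀ (H₀ x + (z : ℂ) • x) = x)
    (hRleft : ∀ x, (H₀ (R x) - W (R x)) + (z : ℂ) • R x = x)
    (hRright : ∀ x ∈ D, R ((H₀ x - W x) + (z : ℂ) • x) = x)
    -- the bounded operator A R₀(z)
    (AR₀ : E →L[ℂ] F) (hAR₀ : ∀ x, AR₀ x = A (R₀ x)) :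
    (∀ x ∈ D, 0 ≤ (⟪x, H₀ x - W x⟫_ℂ).re) ∧
    ∀ x : E, ‖R x - R₀ x‖ ≤ (1 + C * (1 + δ) / δ) * ‖AR₀‖ ^ 2 * ‖x‖ := by
  have hJadj : ∀ (w s : F), ⟪J w, s⟫_ℂ = ⟪w, J s⟫_ℂ := by
    intro w s
    have h := ContinuousLinearMap.isSelfAdjoint_iff'.mp hJsa
    nth_rewrite 1 [← h]
    exact ContinuousLinearMap.adjoint_inner_left J s w
  have hJnorm : ∀ w : F, ‖J w‖ = ‖w‖ := by
    intro w
    have h1 : ‖J w‖ ^ 2 = ‖w‖ ^ 2 := by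
      rw [← inner_self_eq_norm_sq (𝕜 := ℂ), ← inner_self_eq_norm_sq (𝕜 := ℂ),
        hJadj, hJunit]
    rw [← Real.sqrt_sq (norm_nonneg (J w)), ← Real.sqrt_sq (norm_nonneg w), h1]
  set K : ℝ := C * (1 + δ) / δ with hK
  have hK0 : 0 ≤ K := by positivity
  -- R₀ is self-adjoint
  have hR₀sym : ∀ y s : E, ⟪R₀ y, s⟫_ℂ = ⟪y, R₀ s⟫_ℂ := by
    intro y s
    have hu := hR₀mem y
    have hv := hR₀mem s
    calc ⟪R₀ y, s⟫_ℂ = ⟪R₀ y, H₀ (R₀ s) + (z:ℂ) • R₀ s⟫_ℂ := by rw [hR₀left s]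
      _ = ⟪R₀ y, H₀ (R₀ s)⟫_ℂ + (z:ℂ) * ⟪R₀ y, R₀ s⟫_ℂ := by
          rw [inner_add_right, inner_smul_right]
      _ = ⟪H₀ (R₀ y), R₀ s⟫_ℂ + (z:ℂ) * ⟪R₀ y, R₀ s⟫_ℂ := by
          rw [hH₀sym _ hu _ hv]
      _ = ⟪H₀ (R₀ y) + (z:ℂ) • R₀ y, R₀ s⟫_ℂ := by
          rw [inner_add_left, inner_smul_left, Complex.conj_ofReal]
      _ = ⟪y, R₀ s⟫_ℂ := by rw [hR₀left y]
  -- resolvent identities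
  have hid1 : ∀ x : E, R x = R₀ x + R₀ (W (R x)) := by
    intro x
    have h := hR₀right (R x) (hRmem x)
    have hx : H₀ (R x) + (z:ℂ) • R x = x + W (R x) := by
      have h2 := hRleft x
      calc H₀ (R x) + (z:ℂ) • R x
          = ((H₀ (R x) - W (R x)) + (z:ℂ) • R x) + W (R x) := by abel
        _ = x + W (R x) := by rw [h2]
    rw [hx, map_add] at h
    exact h.symm
  have hid2 : ∀ x : E, R x = R₀ x + R (W (R₀ x)) := by
    intro x
    have h := hRright (R₀ x) (hR₀mem x)
    have hx : (H₀ (R₀ x) - W (R₀ x)) + (z:ℂ) • R₀ x = x - W (R₀ x) := by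
      have h2 := hR₀left x
      calc (H₀ (R₀ x) - W (R₀ x)) + (z:ℂ) • R₀ x
          = (H₀ (R₀ x) + (z:ℂ) • R₀ x) - W (R₀ x) := by abel
        _ = x - W (R₀ x) := by rw [h2]
    rw [hx, map_sub] at h
    exact sub_eq_iff_eq_add.mp h
  -- key estimate : ‖A (R (W u))‖ ≤ K * ‖A u‖ for u ∈ D
  have hkey : ∀ u ∈ D, ‖A (R (W u))‖ ≤ K * ‖A u‖ := by
    intro u hu
    set v : E := R (W u) with hv
    have hvD : v ∈ D := hRmem _
    have h1 : ‖A v‖ ^ 2 ≤ C * (⟪v, H₀ v⟫_ℂ).re := hCform v hvD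
    have h2 := hform v hvD
    have hvpos := hH₀pos v hvD
    have h3 : (⟪v, H₀ v⟫_ℂ).re - (⟪v, W v⟫_ℂ).re + z * (⟪v, v⟫_ℂ).re
        = (⟪v, W u⟫_ℂ).re := by
      have h4 : ⟪v, (H₀ v - W v) + (z:ℂ) • v⟫_ℂ = ⟪v, W u⟫_ℂ := by
        rw [hRleft (W u)]
      rw [inner_add_right, inner_sub_right, inner_smul_right] at h4
      have h5 := congrArg Complex.re h4
      simpa [Complex.add_re, Complex.sub_re, Complex.mul_re, Complex.ofReal_re,
        Complex.ofReal_im] using h5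
    have h6 : (⟪v, W u⟫_ℂ).re ≤ ‖A v‖ * ‖A u‖ := by
      rw [hWdef u hu v hvD]
      calc (⟪A v, J (A u)⟫_ℂ).re ≤ ‖(⟪A v, J (A u)⟫_ℂ)‖ := Complex.re_le_norm _
        _ ≤ ‖A v‖ * ‖J (A u)‖ := norm_inner_le_norm _ _
        _ = ‖A v‖ * ‖A u‖ := by rw [hJnorm]
    have hn : 0 ≤ (⟪v, v⟫_ℂ).re := by
      have : (⟪v, v⟫_ℂ).re = ‖v‖ ^ 2 := inner_self_eq_norm_sq (𝕜 := ℂ) v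
      rw [this]; positivity
    -- derive a δ ≤ (1+δ) ‖A v‖ ‖A u‖ with a = re⟪v,H₀v⟫
    have h7 : (⟪v, H₀ v⟫_ℂ).re * δ ≤ (1 + δ) * (‖A v‖ * ‖A u‖) := by
      nlinarith [mul_le_mul_of_nonneg_left
        (show (⟪v, H₀ v⟫_ℂ).re - (⟪v, W v⟫_ℂ).re ≤ ‖A v‖ * ‖A u‖ by nlinarith)
        (show (0:ℝ) ≤ 1 + δ by linarith)]
    rcases eq_or_lt_of_le (norm_nonneg (A v)) with h0 | h0
    · rw [← h0]; positivity
    · rw [hK, div_mul_eq_mul_div, le_div_iff₀ hδ]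
      nlinarith [mul_le_mul_of_nonneg_left h7 (le_of_lt hC)]
  constructor
  · intro x hx
    have h1 := hH₀pos x hx
    have h2 := hform x hx
    rw [inner_sub_right, Complex.sub_re]
    nlinarith
  · intro x
    rcases eq_or_lt_of_le (norm_nonneg (R x - R₀ x)) with h0 | h0
    · rw [← h0]; positivity
    have htv : R x - R₀ x = R₀ (W (R x)) := sub_eq_iff_eq_add'.mpr (hid1 x)
    set t : E := R x - R₀ x with ht
    have hWRx : W (R x) = W (R₀ x) + W (R (W (R₀ x))) := by
      rw [hid2 x, map_add]
    have e1 : ⟪t, t⟫_ℂ = ⟪A (R₀ t), J (A (R₀ x))⟫_ℂ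
        + ⟪A (R₀ t), J (A (R (W (R₀ x))))⟫_ℂ := by
      calc ⟪t, t⟫_ℂ = ⟪t, R₀ (W (R x))⟫_ℂ := by rw [← htv]
        _ = ⟪R₀ t, W (R x)⟫_ℂ := (hR₀sym t _).symm
        _ = ⟪R₀ t, W (R₀ x)⟫_ℂ + ⟪R₀ t, W (R (W (R₀ x)))⟫_ℂ := by
            rw [hWRx, inner_add_right]
        _ = ⟪A (R₀ t), J (A (R₀ x))⟫_ℂ + ⟪A (R₀ t), J (A (R (W (R₀ x))))⟫_ℂ := by
            rw [hWdef (R₀ x) (hR₀mem x) (R₀ t) (hR₀mem t),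
              hWdef (R (W (R₀ x))) (hRmem _) (R₀ t) (hR₀mem t)]
    have hb1 : (⟪A (R₀ t), J (A (R₀ x))⟫_ℂ).re ≤ (‖AR₀‖ * ‖t‖) * (‖AR₀‖ * ‖x‖) := by
      calc (⟪A (R₀ t), J (A (R₀ x))⟫_ℂ).re ≤ ‖(⟪A (R₀ t), J (A (R₀ x))⟫_ℂ)‖ :=
            Complex.re_le_norm _
        _ ≤ ‖A (R₀ t)‖ * ‖J (A (R₀ x))‖ := norm_inner_le_norm _ _
        _ = ‖A (R₀ t)‖ * ‖A (R₀ x)‖ := by rw [hJnorm]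
        _ = ‖AR₀ t‖ * ‖AR₀ x‖ := by rw [hAR₀, hAR₀]
        _ ≤ (‖AR₀‖ * ‖t‖) * (‖AR₀‖ * ‖x‖) :=
            mul_le_mul (AR₀.le_opNorm t) (AR₀.le_opNorm x) (norm_nonneg _)
              (by positivity)
    have hb2 : (⟪A (R₀ t), J (A (R (W (R₀ x))))⟫_ℂ).re
        ≤ (‖AR₀‖ * ‖t‖) * (K * (‖AR₀‖ * ‖x‖)) := by
      have hAv : ‖A (R (W (R₀ x)))‖ ≤ K * (‖AR₀‖ * ‖x‖) := by
        calc ‖A (R (W (R₀ x)))‖ ≤ K * ‖A (R₀ x)‖ := hkey (R₀ x) (hR₀mem x)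
          _ = K * ‖AR₀ x‖ := by rw [hAR₀]
          _ ≤ K * (‖AR₀‖ * ‖x‖) :=
              mul_le_mul_of_nonneg_left (AR₀.le_opNorm x) hK0
      calc (⟪A (R₀ t), J (A (R (W (R₀ x))))⟫_ℂ).re
          ≤ ‖(⟪A (R₀ t), J (A (R (W (R₀ x))))⟫_ℂ)‖ := Complex.re_le_norm _
        _ ≤ ‖A (R₀ t)‖ * ‖J (A (R (W (R₀ x))))‖ := norm_inner_le_norm _ _
        _ = ‖A (R₀ t)‖ * ‖A (R (W (R₀ x)))‖ := by rw [hJnorm]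
        _ = ‖AR₀ t‖ * ‖A (R (W (R₀ x)))‖ := by rw [hAR₀]
        _ ≤ (‖AR₀‖ * ‖t‖) * (K * (‖AR₀‖ * ‖x‖)) :=
            mul_le_mul (AR₀.le_opNorm t) hAv (norm_nonneg _) (by positivity)
    have hsq : ‖t‖ ^ 2 ≤ (1 + K) * ‖AR₀‖ ^ 2 * ‖x‖ * ‖t‖ := by
      have e2 : (‖t‖:ℝ) ^ 2 = (⟪t, t⟫_ℂ).re := (inner_self_eq_norm_sq (𝕜 := ℂ) t).symm
      rw [e2, e1, Complex.add_re]
      nlinarith [hb1, hb2]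
    have := (mul_le_mul_iff_of_pos_right h0).mp
      (by linarith [hsq] : ‖t‖ * ‖t‖ ≤ ((1 + K) * ‖AR₀‖ ^ 2 * ‖x‖) * ‖t‖)
    simpa [hK] using this
end
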